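/- Not every choice of one WRD candidate per read yields a some-schedulable happens-before relation: there exists a trace T and a function choosing, for each read event r of T, exactly one candidate c(r) ∈ W(r), such that the relation generated by the PO edges, the RAD edges, and the edges c(r) → r contains a cycle and hence extends to no partial order. Concretely, for T = [thread 2: wr(x) at position 1, thread 1: wr(y) at position 2, thread 1: rd(y) at position 3, thread 1: wr(x) at position 4, thread 2: rd(x) at position 5, thread 2: wr(y) at position 6], choosing c(rd(y)@3) = wr(y)@6 and c(rd(x)@5) = wr(x)@4 produces the cycle wr(x)@4 → rd(x)@5 → wr(y)@6 → rd(y)@3 → wr(x)@4. -/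
import Mathlib


/-- Operations an event can perform: read/write on a shared variable,
    acquire/release on a mutex. Variables and mutexes are named by naturals. -/
inductive Op : Type where
  | read : ℕ → Op
  | write : ℕ → Op
  | acq : ℕ → Op
  | rel : ℕ → Op
deriving DecidableEq

/-- An event carries a thread identifier, a trace position and an operation. -/
structure Event : Type where
  tid : ℕ
  pos : ℕ
  op : Op
deriving DecidableEq

/-- A trace is well formed if the recorded position of each event equals its index. -/
def WellFormed (T : List Event) : Prop :=
  ∀ i : Fin T.length, (T.get i).pos = (i : ℕ)

/-- Program-order edge: same thread, earlier position. -/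
def POEdge (T : List Event) (e f : Event) : Prop :=
  e ∈ T ∧ f ∈ T ∧ e.tid = f.tid ∧ e.pos < f.pos

/-- Release-acquire edge: a release of mutex `y` before an acquire of `y` in another
    thread, with no intervening acquire of `y` by a thread other than the releasing one. -/
def RADEdge (T : List Event) (e f : Event) : Prop :=
  e ∈ T ∧ f ∈ T ∧ ∃ y, e.op = Op.rel y ∧ f.op = Op.acq y ∧
    e.tid ≠ f.tid ∧ e.pos < f.pos ∧
    ∀ g ∈ T, e.pos < g.pos → g.pos < f.pos → g.tid ≠ e.tid → g.op ≠ Op.acq y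

/-- The happens-before relation: smallest (strict) partial order containing PO and RAD,
    i.e. the transitive closure of the PO and RAD edges. -/
def HB (T : List Event) : Event → Event → Prop :=
  Relation.TransGen (fun e f => POEdge T e f ∨ RADEdge T e f)

/-- Two events are unsynchronized if neither happens before the other. -/
def Unsync (T : List Event) (e f : Event) : Prop := ¬ HB T e f ∧ ¬ HB T f e

/-- Unsynchronized WRD candidates for the read `r` on variable `x`. -/
def W1 (T : List Event) (x : ℕ) (r : Event) : Set Event :=
  {w | w ∈ T ∧ w.op = Op.write x ∧ Unsync T r w ∧
    ∀ w' ∈ T, w' ≠ w → w'.op = Op.write x → Unsync T r w' → ¬ HB T w w'}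

/-- Synchronized WRD candidates for the read `r` on variable `x`. -/
def W2 (T : List Event) (x : ℕ) (r : Event) : Set Event :=
  {w | w ∈ T ∧ w.op = Op.write x ∧ HB T w r ∧
    ∀ w' ∈ T, w' ≠ w → w'.op = Op.write x → HB T w' r → ¬ HB T w w'}

/-- All WRD candidates. -/
def Wcand (T : List Event) (x : ℕ) (r : Event) : Set Event :=
  W1 T x r ∪ W2 T x r

/-- Write-read dependency edge: the nearest preceding write on the same variable. -/
def WRDEdge (T : List Event) (w r : Event) : Prop :=
  w ∈ T ∧ r ∈ T ∧ ∃ x, w.op = Op.write x ∧ r.op = Op.read x ∧ w.pos < r.pos ∧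
    ∀ g ∈ T, w.pos < g.pos → g.pos < r.pos → g.op ≠ Op.write x

/-- The schedulable happens-before relation: smallest partial order containing
    PO, RAD and WRD edges. -/
def SHB (T : List Event) : Event → Event → Prop :=
  Relation.TransGen (fun e f => POEdge T e f ∨ RADEdge T e f ∨ WRDEdge T e f)

/-- Every read event enjoys an initial write. -/
def InitialWrites (T : List Event) : Prop :=
  ∀ r ∈ T, ∀ x, r.op = Op.read x → (W2 T x r).Nonempty

/-- A some-schedulable happens-before relation: any (strict) partial order satisfying
    PO and RAD such that every read is preceded by some of its WRD candidates. -/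
structure SomeSHB (T : List Event) (R : Event → Event → Prop) : Prop where
  trans : ∀ {a b c : Event}, R a b → R b c → R a c
  irrefl : ∀ a : Event, ¬ R a a
  po : ∀ {e f : Event}, POEdge T e f → R e f
  rad : ∀ {e f : Event}, RADEdge T e f → R e f
  wrd : ∀ r ∈ T, ∀ x, r.op = Op.read x → ∃ w ∈ Wcand T x r, R w r

/-- A WRD-candidate edge of the graph derived from `T` (labelled `W(r)`). -/
def CandEdge (T : List Event) (w r : Event) : Prop :=
  r ∈ T ∧ ∃ x, r.op = Op.read x ∧ w ∈ Wcand T x r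

/-- An edge of the graph derived from `T`: an HB edge or a WRD-candidate edge. -/
def GEdge (T : List Event) (e f : Event) : Prop :=
  HB T e f ∨ CandEdge T e f

/-- A path in the graph derived from `T`: a nonempty sequence of edges
    visiting pairwise distinct nodes. -/
def GPath (T : List Event) (e f : Event) : Prop :=
  ∃ (n : ℕ) (p : Fin (n + 1) → Event), 0 < n ∧ Function.Injective p ∧
    p 0 = e ∧ p (Fin.last n) = f ∧
    ∀ i : Fin n, GEdge T (p i.castSucc) (p i.succ)


namespace St13

def e0 : Event := ⟨2, 0, Op.write 0⟩
def e1 : Event := ⟨1, 1, Op.write 1⟩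
def e2 : Event := ⟨1, 2, Op.read 1⟩
def e3 : Event := ⟨1, 3, Op.write 0⟩
def e4 : Event := ⟨2, 4, Op.read 0⟩
def e5 : Event := ⟨2, 5, Op.write 1⟩

def T0 : List Event := [e0, e1, e2, e3, e4, e5]

lemma m0 : e0 ∈ T0 := by simp [T0]
lemma m1 : e1 ∈ T0 := by simp [T0]
lemma m2 : e2 ∈ T0 := by simp [T0]
lemma m3 : e3 ∈ T0 := by simp [T0]
lemma m4 : e4 ∈ T0 := by simp [T0]
lemma m5 : e5 ∈ T0 := by simp [T0]

lemma noRAD (e f : Event) : ¬ RADEdge T0 e f := by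
  rintro ⟨he, hf, y, hrel, -⟩
  fin_cases he <;> simp [e0, e1, e2, e3, e4, e5] at hrel

lemma hb_po {e f : Event} (h : HB T0 e f) : POEdge T0 e f := by
  induction h with
  | single h => exact h.resolve_right (noRAD _ _)
  | tail h₂ h₃ ih =>
      rcases h₃.resolve_right (noRAD _ _) with ⟨hf, hg, ht, hp⟩
      exact ⟨ih.1, hg, ih.2.2.1.trans ht, ih.2.2.2.trans hp⟩

lemma po12 : POEdge T0 e1 e2 := ⟨m1, m2, rfl, by norm_num [e1, e2]⟩
lemma po23 : POEdge T0 e2 e3 := ⟨m2, m3, rfl, by norm_num [e2, e3]⟩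
lemma po04 : POEdge T0 e0 e4 := ⟨m0, m4, rfl, by norm_num [e0, e4]⟩
lemma po45 : POEdge T0 e4 e5 := ⟨m4, m5, rfl, by norm_num [e4, e5]⟩

lemma hb12 : HB T0 e1 e2 := Relation.TransGen.single (Or.inl po12)
lemma hb04 : HB T0 e0 e4 := Relation.TransGen.single (Or.inl po04)

lemma unsync_of_tid {e f : Event} (h : e.tid ≠ f.tid) : Unsync T0 e f :=
  ⟨fun hb => h (hb_po hb).2.2.1, fun hb => h ((hb_po hb).2.2.1).symm⟩

lemma cand25 : e5 ∈ Wcand T0 1 e2 := by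
  refine Set.mem_union_left _ ⟨m5, rfl, unsync_of_tid (by simp [e2, e5]), ?_⟩
  intro w' hw' hne hop huns
  fin_cases hw'
  · exact absurd hop (by simp [e0])
  · exact absurd hb12 huns.2
  · exact absurd hop (by simp [e2])
  · exact absurd hop (by simp [e3])
  · exact absurd hop (by simp [e4])
  · exact absurd rfl hne

lemma cand43 : e3 ∈ Wcand T0 0 e4 := by
  refine Set.mem_union_left _ ⟨m3, rfl, unsync_of_tid (by simp [e3, e4]), ?_⟩
  intro w' hw' hne hop huns
  fin_cases hw'
  · exact absurd hb04 huns.2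
  · exact absurd hop (by simp [e1])
  · exact absurd hop (by simp [e2])
  · exact absurd rfl hne
  · exact absurd hop (by simp [e4])
  · exact absurd hop (by simp [e5])

def ch : Event → Event := fun e =>
  if e = e2 then e5 else if e = e4 then e3 else e

lemma ch2 : ch e2 = e5 := by simp [ch]
lemma ch4 : ch e4 = e3 := by simp [ch, e2, e4]

end St13

open St13 in
/-- not every choice of one WRD candidate per read yields a
    some-schedulable happens-before relation: for the concrete trace
    `[2:wr(x), 1:wr(y), 1:rd(y), 1:wr(x), 2:rd(x), 2:wr(y)]` (with `x = 0`, `y = 1`)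
    the choice `c(rd y) = wr(y)@5`, `c(rd x) = wr(x)@3` is a choice of WRD candidates
    whose generated relation contains a cycle, hence extends to no partial order. -/
theorem stmt13 :
    ∃ T : List Event,
      T = [⟨2, 0, Op.write 0⟩, ⟨1, 1, Op.write 1⟩, ⟨1, 2, Op.read 1⟩,
           ⟨1, 3, Op.write 0⟩, ⟨2, 4, Op.read 0⟩, ⟨2, 5, Op.write 1⟩] ∧
      WellFormed T ∧
      ∃ c : Event → Event,
        (∀ r ∈ T, ∀ x, r.op = Op.read x → c r ∈ Wcand T x r) ∧
        c ⟨1, 2, Op.read 1⟩ = ⟨2, 5, Op.write 1⟩ ∧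
        c ⟨2, 4, Op.read 0⟩ = ⟨1, 3, Op.write 0⟩ ∧
        (∃ a : Event, Relation.TransGen
            (fun u v => POEdge T u v ∨ RADEdge T u v ∨
              (v ∈ T ∧ (∃ x, v.op = Op.read x) ∧ u = c v)) a a) ∧
        ¬ ∃ R : Event → Event → Prop,
            (∀ a b c' : Event, R a b → R b c' → R a c') ∧
            (∀ a : Event, ¬ R a a) ∧
            (∀ u v : Event, (POEdge T u v ∨ RADEdge T u v ∨
              (v ∈ T ∧ (∃ x, v.op = Op.read x) ∧ u = c v)) → R u v) := by
  classical
  refine ⟨T0, rfl, ?_, ch, ?_, ch2, ch4, ?_, ?_⟩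
  · intro i
    fin_cases i <;> rfl
  · intro r hr x hx
    fin_cases hr <;> simp [e0, e1, e2, e3, e4, e5] at hx ⊢
    · subst hx; exact cand25
    · subst hx; exact cand43
  · refine ⟨e3, ?_⟩
    have h34 : POEdge T0 e3 e4 ∨ RADEdge T0 e3 e4 ∨
        (e4 ∈ T0 ∧ (∃ x, e4.op = Op.read x) ∧ e3 = ch e4) :=
      Or.inr (Or.inr ⟨m4, ⟨0, rfl⟩, ch4.symm⟩)
    have h45 : POEdge T0 e4 e5 ∨ RADEdge T0 e4 e5 ∨
        (e5 ∈ T0 ∧ (∃ x, e5.op = Op.read x) ∧ e4 = ch e5) := Or.inl po45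
    have h52 : POEdge T0 e5 e2 ∨ RADEdge T0 e5 e2 ∨
        (e2 ∈ T0 ∧ (∃ x, e2.op = Op.read x) ∧ e5 = ch e2) :=
      Or.inr (Or.inr ⟨m2, ⟨1, rfl⟩, ch2.symm⟩)
    have h23 : POEdge T0 e2 e3 ∨ RADEdge T0 e2 e3 ∨
        (e3 ∈ T0 ∧ (∃ x, e3.op = Op.read x) ∧ e2 = ch e3) := Or.inl po23
    exact Relation.TransGen.head h34 (Relation.TransGen.head h45
      (Relation.TransGen.head h52 (Relation.TransGen.single h23)))
  · rintro ⟨R, htrans, hirr, hedge⟩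
    have r34 := hedge e3 e4 (Or.inr (Or.inr ⟨m4, ⟨0, rfl⟩, ch4.symm⟩))
    have r45 := hedge e4 e5 (Or.inl po45)
    have r52 := hedge e5 e2 (Or.inr (Or.inr ⟨m2, ⟨1, rfl⟩, ch2.symm⟩))
    have r23 := hedge e2 e3 (Or.inl po23)
    exact hirr e3 (htrans _ _ _ (htrans _ _ _ (htrans _ _ _ r34 r45) r52) r23)
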